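/- Let H ⊆ L⁰_{b-} be monotone, normalized and closed under liminf, and define φ(f) := inf{m ∈ ℝ : m + h ≥ f pointwise for some h ∈ H}. Then φ is continuous from below on L⁰_{b-}: for every sequence (f_n) in L⁰_{b-} increasing pointwise to f ∈ L⁰_{b-}, one has φ(f) = lim_n φ(f_n). -/

import Mathlib

open MeasureTheory Filter ENNReal NNReal

/-- Positive part of an extended real number, as an element of `[0,∞]`. -/
noncomputable def ERealPosPart (x : EReal) : ℝ≥0∞ :=
  if x = ⊤ then ⊤ else ENNReal.ofReal x.toReal

section Defs

variable {Ω : Type*} [TopologicalSpace Ω] [MeasurableSpace Ω]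

/-- The pairing `⟨f,μ⟩ = ∫ f dμ` for an extended-real-valued function `f`; for `f` bounded
from below and `μ` a finite measure this is the usual (extended-valued) integral. -/
noncomputable def ePair (f : Ω → EReal) (μ : Measure Ω) : EReal :=
  ((∫⁻ x, ERealPosPart (f x) ∂μ : ℝ≥0∞) : EReal) -
    ((∫⁻ x, ERealPosPart (-f x) ∂μ : ℝ≥0∞) : EReal)

/-- `L⁰_{b-}`: the set of Borel measurable functions `Ω → ℝ ∪ {+∞}` which are bounded from
below (modelled as `EReal`-valued functions bounded below by a real constant). -/
def L0b : Set (Ω → EReal) :=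
  {f | Measurable f ∧ ∃ c : ℝ, ∀ x, (c : EReal) ≤ f x}

/-- `H ⊆ L⁰_{b-}` is monotone: `f ∈ H` whenever `f ∈ L⁰_{b-}` satisfies `f ≤ h` for some
`h ∈ H`. -/
def MonotoneB (H : Set (Ω → EReal)) : Prop :=
  ∀ f ∈ L0b, (∃ h ∈ H, ∀ x, f x ≤ h x) → f ∈ H

/-- `H` is normalized: the constant function `0` belongs to `H` and no constant
function `ε > 0` belongs to `H`. -/
def NormalizedB (H : Set (Ω → EReal)) : Prop :=
  (fun _ => (0 : EReal)) ∈ H ∧ ∀ ε : ℝ, 0 < ε → (fun _ => (ε : EReal)) ∉ H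

/-- `H` is tight: for every constant `m ∈ ℝ` with `m ∈ H`, every `n ∈ ℕ` and `ε > 0` there
is a compact `K ⊆ Ω` with `m − ε + n·1_{Kᶜ} ∈ H`. -/
def TightB (H : Set (Ω → EReal)) : Prop :=
  ∀ m : ℝ, (fun _ => (m : EReal)) ∈ H → ∀ n : ℕ, ∀ ε : ℝ, 0 < ε →
    ∃ K : Set Ω, IsCompact K ∧
      (fun x => (m : EReal) - (ε : EReal) + (Kᶜ).indicator (fun _ => (n : EReal)) x) ∈ H

/-- `H` is closed under `liminf`: `liminf_n h_n ∈ H` for every sequence `(h_n)` in `H`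
with `h_n ≥ c` for some constant `c ∈ ℝ`. -/
def LiminfClosedB (H : Set (Ω → EReal)) : Prop :=
  ∀ h : ℕ → Ω → EReal, (∀ n, h n ∈ H) → (∃ c : ℝ, ∀ n x, (c : EReal) ≤ h n x) →
    (fun x => liminf (fun n => h n x) atTop) ∈ H

/-- `H` is convex. -/
def ConvexB (H : Set (Ω → EReal)) : Prop :=
  ∀ f ∈ H, ∀ g ∈ H, ∀ t : ℝ, 0 ≤ t → t ≤ 1 →
    (fun x => (t : EReal) * f x + ((1 - t : ℝ) : EReal) * g x) ∈ H

/-- `h` is (the coercion of) a bounded continuous real-valued function. -/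
def IsCbB (h : Ω → EReal) : Prop :=
  Continuous h ∧ ∃ C : ℝ, ∀ x, -(C : EReal) ≤ h x ∧ h x ≤ (C : EReal)

/-- `h` is (the coercion of) a bounded upper semicontinuous real-valued function. -/
def IsUbB (h : Ω → EReal) : Prop :=
  UpperSemicontinuous h ∧ ∃ C : ℝ, ∀ x, -(C : EReal) ≤ h x ∧ h x ≤ (C : EReal)

/-- `H` is regular: for every Borel probability measure `μ`, the supremum of `⟨h,μ⟩` over
`H ∩ U_b` coincides with the supremum over `H ∩ C_b`. -/
def RegularB (H : Set (Ω → EReal)) : Prop :=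
  ∀ μ : Measure Ω, IsProbabilityMeasure μ →
    sSup {x : EReal | ∃ h ∈ H, IsUbB h ∧ x = ePair h μ} =
      sSup {x : EReal | ∃ h ∈ H, IsCbB h ∧ x = ePair h μ}

/-- The polar `H°` of `H ⊆ L⁰_{b-}`: all finite positive Borel measures `μ` with
`⟨f,μ⟩ ≤ 1` for all `f ∈ H`. -/
def polarB (H : Set (Ω → EReal)) : Set (Measure Ω) :=
  {μ | IsFiniteMeasure μ ∧ ∀ f ∈ H, ePair f μ ≤ 1}

/-- The bipolar `H°°` of `H ⊆ L⁰_{b-}`. -/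
def bipolarB (H : Set (Ω → EReal)) : Set (Ω → EReal) :=
  {f | f ∈ L0b ∧ ∀ μ ∈ polarB H, ePair f μ ≤ 1}

/-- The superhedging functional `φ(f) = inf{m ∈ ℝ : m + h ≥ f for some h ∈ H}` (the
infimum of the empty set being `+∞`). -/
noncomputable def sprice (H : Set (Ω → EReal)) (f : Ω → EReal) : EReal :=
  sInf ((fun m : ℝ => (m : EReal)) ''
    {m : ℝ | ∃ h ∈ H, ∀ x, f x ≤ (m : EReal) + h x})

end Defs

/-- (From the proof of Proposition 2.4 in Bartl–Kupper, "A pointwise bipolar theorem".)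
Let `H ⊆ L⁰_{b-}` be monotone, normalized and closed under `liminf`, and let
`φ(f) = inf{m ∈ ℝ : m + h ≥ f for some h ∈ H}`.  Then `φ` is continuous from below: for
every sequence `(f_n)` in `L⁰_{b-}` increasing pointwise to `f ∈ L⁰_{b-}` one has
`φ(f) = lim_n φ(f_n)`. -/
private lemma sprice_mono' {Ω : Type*} (H : Set (Ω → EReal)) {f g : Ω → EReal}
    (hfg : ∀ x, f x ≤ g x) : sprice H f ≤ sprice H g := by
  apply sInf_le_sInf
  apply Set.image_mono
  rintro m ⟨h, hH, hle⟩
  exact ⟨h, hH, fun x => (hfg x).trans (hle x)⟩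

private lemma coe_sub_le_of_le_add {c m : ℝ} {y : EReal} (h : (c : EReal) ≤ (m : EReal) + y) :
    ((c - m : ℝ) : EReal) ≤ y := by
  rw [EReal.coe_sub]
  exact EReal.sub_le_iff_le_add (by simp) (by simp) |>.2 (by rwa [add_comm] at h)

private lemma sprice_lb {Ω : Type*} [MetricSpace Ω] [MeasurableSpace Ω] [BorelSpace Ω]
    {H : Set (Ω → EReal)} (hmono : MonotoneB H) (hnorm : NormalizedB H)
    {f : Ω → EReal} {c : ℝ} (hc : ∀ x, (c : EReal) ≤ f x) :
    (c : EReal) ≤ sprice H f := by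
  apply le_sInf
  rintro b ⟨m, ⟨h, hH, hle⟩, rfl⟩
  rw [EReal.coe_le_coe_iff]
  by_contra hcm
  push_neg at hcm
  have hconst : (fun _ : Ω => ((c - m : ℝ) : EReal)) ∈ H := by
    refine hmono _ ⟨measurable_const, ⟨c - m, fun x => le_refl _⟩⟩ ⟨h, hH, fun x => ?_⟩
    exact coe_sub_le_of_le_add ((hc x).trans (hle x))
  exact hnorm.2 (c - m) (by linarith) hconst

theorem sprice_continuous_from_below
    {Ω : Type*} [MetricSpace Ω] [MeasurableSpace Ω] [BorelSpace Ω]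
    (H : Set (Ω → EReal)) (hsub : H ⊆ L0b)
    (hmono : MonotoneB H) (hnorm : NormalizedB H) (hliminf : LiminfClosedB H)
    (fn : ℕ → Ω → EReal) (f : Ω → EReal)
    (hfn : ∀ n, fn n ∈ L0b) (hf : f ∈ L0b)
    (hincr : Monotone fn) (hlim : ∀ x, f x = ⨆ n, fn n x) :
    Tendsto (fun n => sprice H (fn n)) atTop (nhds (sprice H f)) := by
  have hmonoφ : Monotone (fun n => sprice H (fn n)) := fun n k hnk =>
    sprice_mono' H (fun x => hincr hnk x)
  have key : sprice H f = ⨆ n, sprice H (fn n) := by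
    apply le_antisymm
    · by_contra hcon
      push_neg at hcon
      obtain ⟨m, hLm, hmf⟩ := EReal.exists_between_coe_real hcon
      obtain ⟨c0, hc0⟩ := (hfn 0).2
      have hsel : ∀ n, ∃ h ∈ H, ∀ x, fn n x ≤ (m : EReal) + h x := by
        intro n
        have h1 : sprice H (fn n) < (m : EReal) :=
          lt_of_le_of_lt (le_iSup (fun n => sprice H (fn n)) n) hLm
        obtain ⟨b, hbmem, hbm⟩ := sInf_lt_iff.1 h1
        obtain ⟨mn, ⟨h, hH, hle⟩, rfl⟩ := hbmem
        refine ⟨h, hH, fun x => (hle x).trans (add_le_add ?_ le_rfl)⟩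
        exact le_of_lt hbm
      choose h hH hle using hsel
      have hlb : ∀ n x, ((c0 - m : ℝ) : EReal) ≤ h n x := fun n x =>
        coe_sub_le_of_le_add (((hc0 x).trans (hincr (Nat.zero_le n) x)).trans (hle n x))
      have hHlim : (fun x => liminf (fun n => h n x) atTop) ∈ H :=
        hliminf h hH ⟨c0 - m, hlb⟩
      have hfle : ∀ x, f x ≤ (m : EReal) + liminf (fun n => h n x) atTop := by
        intro x
        have hmx : Monotone (fun n => fn n x) := fun a b hab => hincr hab x
        have h2 : f x = liminf (fun n => fn n x) atTop := by
          rw [hlim x]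
          exact ((tendsto_atTop_iSup hmx).liminf_eq).symm
        rw [h2]
        have h3 : liminf (fun n => fn n x) atTop ≤
            liminf (fun n => (m : EReal) + h n x) atTop :=
          liminf_le_liminf (Eventually.of_forall (fun n => hle n x))
        refine h3.trans ?_
        have h4 := EReal.liminf_add_le (u := fun _ : ℕ => (m : EReal))
          (v := fun n => h n x) (f := atTop) ?_ ?_
        · rwa [limsup_const] at h4
        · rw [limsup_const]; exact Or.inl (by simp)
        · rw [limsup_const]; exact Or.inl (by simp)
      have : sprice H f ≤ (m : EReal) :=
        sInf_le ⟨m, ⟨_, hHlim, hfle⟩, rfl⟩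
      exact absurd hmf (not_lt.2 this)
    · exact iSup_le fun n => sprice_mono' H
        (fun x => (hlim x) ▸ le_iSup (fun n => fn n x) n)
  rw [key]
  exact tendsto_atTop_iSup hmonoφ
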